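/- arXiv:1812.03108 — 2 statements merged into one kernel-verified Lean document; each statement's English description precedes it below -/
import Mathlib

section
/- Let X be a random element of L²([0,1]) with P(‖X‖ > u) > 0 for all u > 0, such that u ↦ u^α P(‖X‖ > u) is slowly varying for some α > 0, and such that the conditional distribution of X/‖X‖ given ‖X‖ > u (the probability measure B ↦ P(X/‖X‖ ∈ B, ‖X‖ > u)/P(‖X‖ > u)) converges weakly, as u → ∞, to a probability measure Γ on L²([0,1]). Let Y = X ⊗ X ∈ L²([0,1]²). Then ‖Y‖ = ‖X‖², P(‖Y‖ > u) = P(‖X‖ > u^{1/2}) so that u ↦ u^{α/2} P(‖Y‖ > u) is slowly varying, and the conditional distribution of Y/‖Y‖ given ‖Y‖ > u converges weakly, as u → ∞, to the pushforward of Γ under the continuous map x ↦ x ⊗ x. In particular, Y is regularly varying in L²([0,1]²) with index α/2 and its angular measure is the image of the angular measure of X under x ↦ x ⊗ x. -/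
open MeasureTheory ProbabilityTheory Filter Topology unitInterval
open scoped RealInnerProductSpace

noncomputable section

/-- `L²([0,1])`, the space of square-integrable functions on the unit interval. -/
abbrev Hsp : Type := Lp ℝ 2 (volume : Measure I)

/-- `L²([0,1]²)`, the space of square-integrable kernels on the unit square. -/
abbrev Ksp : Type := Lp ℝ 2 (volume : Measure (I × I))

lemma memℒp_tensorKernel (f g : Hsp) :
    MemLp (fun q : I × I => f q.1 * g q.2) 2 (volume : Measure (I × I)) := by
  have hf : Integrable (fun t => (f t) ^ 2) (volume : Measure I) :=
    (memLp_two_iff_integrable_sq (Lp.aestronglyMeasurable f)).mp (Lp.memLp f)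
  have hg : Integrable (fun t => (g t) ^ 2) (volume : Measure I) :=
    (memLp_two_iff_integrable_sq (Lp.aestronglyMeasurable g)).mp (Lp.memLp g)
  have hfg : Integrable (fun q : I × I => (f q.1) ^ 2 * (g q.2) ^ 2) volume := by
    rw [Measure.volume_eq_prod]; exact hf.mul_prod hg
  have hmeas : AEStronglyMeasurable (fun q : I × I => f q.1 * g q.2) volume := by
    rw [Measure.volume_eq_prod]
    exact ((Lp.aestronglyMeasurable f).comp_quasiMeasurePreserving
      Measure.quasiMeasurePreserving_fst).mul
      ((Lp.aestronglyMeasurable g).comp_quasiMeasurePreserving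
        Measure.quasiMeasurePreserving_snd)
  rw [memLp_two_iff_integrable_sq hmeas]
  have heq : (fun q : I × I => (f q.1 * g q.2) ^ 2)
      = fun q : I × I => (f q.1) ^ 2 * (g q.2) ^ 2 := by
    funext q; ring
  rw [heq]; exact hfg

/-- `x ⊗ y` : the element of `L²([0,1]²)` represented by the kernel
`(t,s) ↦ x t * y s`. -/
def tensor (f g : Hsp) : Ksp :=
  (memℒp_tensorKernel f g).toLp (fun q : I × I => f q.1 * g q.2)

instance : MeasurableSpace Hsp := borel Hsp
instance : BorelSpace Hsp := ⟨rfl⟩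

lemma tensor_coeFn (f g : Hsp) :
    ⇑(tensor f g) =ᵐ[(volume : Measure (I × I))] fun q => f q.1 * g q.2 :=
  (memℒp_tensorKernel f g).coeFn_toLp

lemma fst_qmp : Measure.QuasiMeasurePreserving (Prod.fst : I × I → I)
    (volume : Measure (I × I)) (volume : Measure I) := by
  rw [Measure.volume_eq_prod]; exact Measure.quasiMeasurePreserving_fst

lemma snd_qmp : Measure.QuasiMeasurePreserving (Prod.snd : I × I → I)
    (volume : Measure (I × I)) (volume : Measure I) := by
  rw [Measure.volume_eq_prod]; exact Measure.quasiMeasurePreserving_snd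

lemma tensor_add_left (f f' g : Hsp) : tensor (f + f') g = tensor f g + tensor f' g := by
  apply Lp.ext
  filter_upwards [tensor_coeFn (f + f') g, fst_qmp.ae_eq_comp (Lp.coeFn_add f f'),
    Lp.coeFn_add (tensor f g) (tensor f' g), tensor_coeFn f g, tensor_coeFn f' g]
    with q e1 e2 e3 e4 e5
  simp only [Function.comp_apply, Pi.add_apply] at *
  rw [e1, e3, e4, e5, e2]; ring

lemma tensor_smul_left (c : ℝ) (f g : Hsp) : tensor (c • f) g = c • tensor f g := by
  apply Lp.ext
  filter_upwards [tensor_coeFn (c • f) g, fst_qmp.ae_eq_comp (Lp.coeFn_smul c f),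
    Lp.coeFn_smul c (tensor f g), tensor_coeFn f g] with q e1 e2 e3 e4
  simp only [Function.comp_apply, Pi.smul_apply, smul_eq_mul] at *
  rw [e1, e3, e4, e2]; ring

lemma tensor_add_right (f g g' : Hsp) : tensor f (g + g') = tensor f g + tensor f g' := by
  apply Lp.ext
  filter_upwards [tensor_coeFn f (g + g'), snd_qmp.ae_eq_comp (Lp.coeFn_add g g'),
    Lp.coeFn_add (tensor f g) (tensor f g'), tensor_coeFn f g, tensor_coeFn f g']
    with q e1 e2 e3 e4 e5
  simp only [Function.comp_apply, Pi.add_apply] at *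
  rw [e1, e3, e4, e5, e2]; ring

lemma tensor_smul_right (c : ℝ) (f g : Hsp) : tensor f (c • g) = c • tensor f g := by
  apply Lp.ext
  filter_upwards [tensor_coeFn f (c • g), snd_qmp.ae_eq_comp (Lp.coeFn_smul c g),
    Lp.coeFn_smul c (tensor f g), tensor_coeFn f g] with q e1 e2 e3 e4
  simp only [Function.comp_apply, Pi.smul_apply, smul_eq_mul] at *
  rw [e1, e3, e4, e2]; ring

lemma tensor_norm (f g : Hsp) : ‖tensor f g‖ = ‖f‖ * ‖g‖ := by
  have key : ⟪tensor f g, tensor f g⟫ = ⟪f, f⟫ * ⟪g, g⟫ := by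
    rw [L2.inner_def, L2.inner_def, L2.inner_def]
    simp only [RCLike.inner_apply, conj_trivial]
    rw [integral_congr_ae (f := fun q => tensor f g q * tensor f g q)
      (g := fun q : I × I => (f q.1 * g q.2) * (f q.1 * g q.2))
      ((tensor_coeFn f g).mul (tensor_coeFn f g))]
    have h : (fun q : I × I => (f q.1 * g q.2) * (f q.1 * g q.2))
        = fun q : I × I => (f q.1 * f q.1) * (g q.2 * g q.2) := by funext q; ring
    rw [h, Measure.volume_eq_prod]
    exact integral_prod_mul (fun a => (f : I → ℝ) a * f a) (fun a => (g : I → ℝ) a * g a)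
  rw [real_inner_self_eq_norm_mul_norm, real_inner_self_eq_norm_mul_norm,
    real_inner_self_eq_norm_mul_norm] at key
  have h2 : ‖tensor f g‖ * ‖tensor f g‖ = (‖f‖ * ‖g‖) * (‖f‖ * ‖g‖) := by
    rw [key]; ring
  exact mul_self_inj (norm_nonneg _) (mul_nonneg (norm_nonneg _) (norm_nonneg _)) |>.mp h2

def tensorCLM : Hsp →L[ℝ] Hsp →L[ℝ] Ksp :=
  LinearMap.mkContinuous₂
    (LinearMap.mk₂ ℝ tensor tensor_add_left tensor_smul_left tensor_add_right
      tensor_smul_right) 1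
    (fun f g => by rw [LinearMap.mk₂_apply, tensor_norm, one_mul])

lemma continuous_tensor_diag : Continuous fun x : Hsp => tensor x x := by
  have h : Continuous fun p : Hsp × Hsp => tensorCLM p.1 p.2 :=
    tensorCLM.isBoundedBilinearMap.continuous
  exact h.comp (continuous_id.prodMk continuous_id)

lemma tendsto_sqrt_atTop : Tendsto Real.sqrt atTop atTop :=
  (tendsto_rpow_atTop one_half_pos).congr fun x => (Real.sqrt_eq_rpow x).symm

/-- Let `X` be a random element of `L²([0,1])` with positive norm
tails, `u ↦ u^α P(‖X‖ > u)` slowly varying for some `α > 0`, and conditional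
distribution of `X/‖X‖` given `‖X‖ > u` converging weakly to a probability measure
`Γ`. Let `Y = X ⊗ X ∈ L²([0,1]²)`. Then `‖Y‖ = ‖X‖²`, `P(‖Y‖ > u) = P(‖X‖ > u^{1/2})`
(so `u ↦ u^{α/2} P(‖Y‖ > u)` is slowly varying), and the conditional distribution of
`Y/‖Y‖` given `‖Y‖ > u` converges weakly to the pushforward of `Γ` under
`x ↦ x ⊗ x`; i.e. `Y` is regularly varying with index `α/2` and angular measure the
image of that of `X`. -/
theorem statement1 {Ω : Type*} [MeasureSpace Ω] [IsProbabilityMeasure (ℙ : Measure Ω)]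
    (X : Ω → Hsp) (hX : Measurable X)
    (α : ℝ) (hα : 0 < α)
    (hpos : ∀ u : ℝ, 0 < u → 0 < ℙ {ω | u < ‖X ω‖})
    (hslow : ∀ l : ℝ, 0 < l →
      Tendsto (fun u : ℝ =>
          ((l * u) ^ α * (ℙ {ω | l * u < ‖X ω‖}).toReal)
            / (u ^ α * (ℙ {ω | u < ‖X ω‖}).toReal))
        atTop (𝓝 1))
    (Γ : Measure Hsp) [IsProbabilityMeasure Γ]
    (hang : ∀ f : BoundedContinuousFunction Hsp ℝ,
      Tendsto (fun u : ℝ =>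
          (∫ ω in {ω | u < ‖X ω‖}, f (‖X ω‖⁻¹ • X ω) ∂ℙ)
            / (ℙ {ω | u < ‖X ω‖}).toReal)
        atTop (𝓝 (∫ x, f x ∂Γ))) :
    (∀ x : Hsp, ‖tensor x x‖ = ‖x‖ ^ 2)
    ∧ (∀ u : ℝ, 0 < u →
        ℙ {ω | u < ‖tensor (X ω) (X ω)‖} = ℙ {ω | Real.sqrt u < ‖X ω‖})
    ∧ (∀ l : ℝ, 0 < l →
      Tendsto (fun u : ℝ =>
          ((l * u) ^ (α / 2) * (ℙ {ω | l * u < ‖tensor (X ω) (X ω)‖}).toReal)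
            / (u ^ (α / 2) * (ℙ {ω | u < ‖tensor (X ω) (X ω)‖}).toReal))
        atTop (𝓝 1))
    ∧ (∀ f : BoundedContinuousFunction Ksp ℝ,
      Tendsto (fun u : ℝ =>
          (∫ ω in {ω | u < ‖tensor (X ω) (X ω)‖},
              f (‖tensor (X ω) (X ω)‖⁻¹ • tensor (X ω) (X ω)) ∂ℙ)
            / (ℙ {ω | u < ‖tensor (X ω) (X ω)‖}).toReal)
        atTop (𝓝 (∫ x, f (tensor x x) ∂Γ))) := by
  have hnorm : ∀ x : Hsp, ‖tensor x x‖ = ‖x‖ ^ 2 := fun x => by rw [tensor_norm, sq]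
  have hset : ∀ u : ℝ, 0 < u →
      {ω | u < ‖tensor (X ω) (X ω)‖} = {ω | Real.sqrt u < ‖X ω‖} := by
    intro u hu
    ext ω
    simp only [Set.mem_setOf_eq, hnorm]
    constructor
    · intro h
      have hx : 0 < ‖X ω‖ := by nlinarith [norm_nonneg (X ω)]
      exact (Real.sqrt_lt' hx).2 h
    · intro h
      have hx : 0 < ‖X ω‖ := (Real.sqrt_nonneg u).trans_lt h
      exact (Real.sqrt_lt' hx).1 h
  have hrw : ∀ v : ℝ, 0 ≤ v → v ^ (α / 2) = Real.sqrt v ^ α := by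
    intro v hv
    rw [Real.sqrt_eq_rpow, ← Real.rpow_mul hv, show (1 / 2 * α : ℝ) = α / 2 by ring]
  refine ⟨hnorm, fun u hu => congrArg ℙ (hset u hu), ?_, ?_⟩
  · intro l hl
    have hsl : 0 < Real.sqrt l := Real.sqrt_pos.2 hl
    have h := (hslow (Real.sqrt l) hsl).comp tendsto_sqrt_atTop
    refine Tendsto.congr' ?_ h
    filter_upwards [eventually_gt_atTop (0 : ℝ)] with u hu
    have hlu : 0 < l * u := mul_pos hl hu
    simp only [Function.comp_apply]
    rw [hset u hu, hset (l * u) hlu, hrw u hu.le, hrw (l * u) hlu.le,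
      Real.sqrt_mul hl.le]
  · intro f
    have h := (hang (f.compContinuous ⟨fun x => tensor x x, continuous_tensor_diag⟩)).comp
      tendsto_sqrt_atTop
    have hval : (∫ x, (f.compContinuous
        (⟨fun x => tensor x x, continuous_tensor_diag⟩ : C(Hsp, Ksp))) x ∂Γ)
        = ∫ x, f (tensor x x) ∂Γ := rfl
    rw [hval] at h
    refine Tendsto.congr' ?_ h
    filter_upwards [eventually_gt_atTop (0 : ℝ)] with u hu
    simp only [Function.comp_apply]
    rw [hset u hu]
    congr 1
    refine setIntegral_congr_fun (measurableSet_lt measurable_const hX.norm) ?_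
    intro ω hω
    have hx : 0 < ‖X ω‖ := (Real.sqrt_nonneg u).trans_lt hω
    have hsm : (‖tensor (X ω) (X ω)‖)⁻¹ • tensor (X ω) (X ω)
        = tensor (‖X ω‖⁻¹ • X ω) (‖X ω‖⁻¹ • X ω) := by
      rw [tensor_smul_left, tensor_smul_right, smul_smul, hnorm, sq, mul_inv]
    exact congrArg f hsm.symm
end
end

section
/- Let X be a random element of a normed space with P(‖X‖ > u) > 0 for all u > 0 and suppose u ↦ u^α P(‖X‖ > u) is slowly varying, where α ∈ (2,4). Let (a_N) be a sequence with a_N → ∞ and N · P(‖X‖ > a_N) → 1, and set k_N = (α/(4−α))^{2/α} a_N². Then N k_N^{−2} E[‖X‖⁴ 1{‖X‖² ≤ k_N}] → 1 as N → ∞. -/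
open MeasureTheory ProbabilityTheory Filter Topology Set

private lemma st12_lemC {G : ℝ → ℝ} {α : ℝ} (hα4 : α < 4)
    (hanti : Antitone G) (hpos : ∀ u : ℝ, 0 < u → 0 < G u)
    (hreg : Tendsto (fun u => G (2*u) / G u) atTop (𝓝 ((2:ℝ) ^ (-α)))) :
    Tendsto (fun x => x^4 * G x) atTop atTop := by
  have h16 : (1/16 : ℝ) < 2 ^ (-α) := by
    have h := Real.rpow_lt_rpow_of_exponent_lt (show (1:ℝ) < 2 by norm_num) (show (-4:ℝ) < -α by linarith)
    have : ((2:ℝ) ^ (-4:ℝ)) = 1/16 := by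
      rw [show (-4:ℝ) = ((-4:ℤ):ℝ) by norm_num, Real.rpow_intCast]
      norm_num
    rwa [this] at h
  set κ : ℝ := ((1/16) + 2 ^ (-α))/2 with hκ
  have hκ1 : (1/16:ℝ) < κ := by rw [hκ]; linarith
  have hκ2 : κ < 2 ^ (-α) := by rw [hκ]; linarith
  have hκpos : 0 < κ := by linarith
  set q : ℝ := 16 * κ with hq
  have hq1 : 1 < q := by rw [hq]; linarith
  obtain ⟨u₁, hu₁⟩ := (eventually_atTop).mp (hreg.eventually (eventually_gt_nhds hκ2))
  set u := max u₁ 1 with hu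
  have hu1 : (1:ℝ) ≤ u := le_max_right _ _
  have hupos : (0:ℝ) < u := by linarith
  have hstep : ∀ v : ℝ, u ≤ v → κ * G v ≤ G (2*v) := by
    intro v hv
    have hvpos : 0 < v := lt_of_lt_of_le hupos hv
    have := hu₁ v (le_trans (le_max_left _ _) hv)
    have hGv : 0 < G v := hpos v hvpos
    rw [lt_div_iff₀ hGv] at this
    linarith
  set c : ℝ := u^4 * G u with hc
  have hcpos : 0 < c := mul_pos (by positivity) (hpos u hupos)
  have key : ∀ n : ℕ, q^n * c ≤ (2^n * u)^4 * G (2^n * u) := by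
    intro n
    induction n with
    | zero => simp [hc]
    | succ n ih =>
      have h2n : (1:ℝ) ≤ 2^n := one_le_pow₀ (by norm_num)
      have hv : u ≤ 2^n * u := le_mul_of_one_le_left hupos.le h2n
      have hs := hstep (2^n * u) hv
      have hGpos : 0 < G (2^n * u) := hpos _ (by positivity)
      calc q^(n+1) * c = q * (q^n * c) := by ring
    _ ≤ q * ((2^n*u)^4 * G (2^n*u)) := by
          apply mul_le_mul_of_nonneg_left ih (by linarith)
    _ = (16 * (2^n*u)^4) * (κ * G (2^n*u)) := by rw [hq]; ring
    _ ≤ (16 * (2^n*u)^4) * G (2*(2^n*u)) := by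
          apply mul_le_mul_of_nonneg_left hs (by positivity)
    _ = (2^(n+1)*u)^4 * G (2^(n+1)*u) := by
          rw [show (2:ℝ)^(n+1) * u = 2*(2^n*u) by ring]; ring
  rw [tendsto_atTop]
  intro M
  have hqn : Tendsto (fun n : ℕ => q^n * c) atTop atTop :=
    (tendsto_pow_atTop_atTop_of_one_lt hq1).atTop_mul_const hcpos
  obtain ⟨n₀, hn₀⟩ := (tendsto_atTop.mp hqn (16 * M)).exists_forall_of_atTop
  filter_upwards [eventually_ge_atTop ((2:ℝ)^(n₀+1) * u)] with x hx
  have hxpos : 0 < x := lt_of_lt_of_le (by positivity) hx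
  have hxu : (2:ℝ)^((n₀+1:ℕ):ℝ) ≤ x / u := by
    rw [Real.rpow_natCast]
    exact (le_div_iff₀ hupos).mpr hx
  have hxu1 : (1:ℝ) ≤ x / u :=
    le_trans (Real.one_le_rpow (by norm_num) (by positivity)) hxu
  set n : ℕ := Nat.floor (Real.logb 2 (x/u)) with hn
  have hxupos : 0 < x / u := by positivity
  have hlogb_ge : ((n₀+1 : ℕ):ℝ) ≤ Real.logb 2 (x/u) := by
    have h1 : Real.logb 2 ((2:ℝ)^((n₀+1:ℕ):ℝ)) = ((n₀+1:ℕ):ℝ) :=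
      Real.logb_rpow (by norm_num) (by norm_num)
    rw [← h1]
    exact Real.logb_le_logb_of_le (by norm_num) (by positivity) hxu
  have hlogb_nonneg : 0 ≤ Real.logb 2 (x/u) := le_trans (by positivity) hlogb_ge
  have hn_ge : n₀ + 1 ≤ n := Nat.le_floor hlogb_ge
  have hlow : (2:ℝ)^n * u ≤ x := by
    have h1 : (2:ℝ)^((n:ℕ):ℝ) ≤ (2:ℝ) ^ (Real.logb 2 (x/u)) :=
      Real.rpow_le_rpow_of_exponent_le (by norm_num) (Nat.floor_le hlogb_nonneg)
    rw [Real.rpow_logb (by norm_num) (by norm_num) hxupos, Real.rpow_natCast] at h1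
    calc (2:ℝ)^n * u ≤ (x/u) * u := by nlinarith
      _ = x := by field_simp
  have hupper : x ≤ (2:ℝ)^(n+1) * u := by
    have h1 : (2:ℝ) ^ (Real.logb 2 (x/u)) ≤ (2:ℝ)^(((n+1:ℕ)):ℝ) :=
      Real.rpow_le_rpow_of_exponent_le (by norm_num)
        (by push_cast; exact (Nat.lt_floor_add_one _).le)
    rw [Real.rpow_logb (by norm_num) (by norm_num) hxupos, Real.rpow_natCast] at h1
    calc x = (x/u) * u := by field_simp
      _ ≤ (2:ℝ)^(n+1) * u := by nlinarith
  have h1 : G ((2:ℝ)^(n+1) * u) ≤ G x := hanti hupper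
  have h2 : ((2:ℝ)^n * u)^4 ≤ x^4 := pow_le_pow_left₀ (by positivity) hlow 4
  have hGp : 0 < G ((2:ℝ)^(n+1)*u) := hpos _ (by positivity)
  have hfin : q^(n+1) * c ≤ 16 * (x^4 * G x) := by
    calc q^(n+1)*c ≤ ((2:ℝ)^(n+1)*u)^4 * G ((2:ℝ)^(n+1)*u) := key (n+1)
      _ = 16 * ((((2:ℝ)^n*u))^4 * G ((2:ℝ)^(n+1)*u)) := by rw [pow_succ]; ring
      _ ≤ 16 * (x^4 * G x) := by
          apply mul_le_mul_of_nonneg_left _ (by norm_num)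
          exact mul_le_mul h2 h1 hGp.le (by positivity)
  have hM := hn₀ (n+1) (by omega)
  linarith

private lemma st12_int {G : ℝ → ℝ} (hG0 : ∀ u, 0 ≤ G u) (hG1 : ∀ u, G u ≤ 1)
    (hGm : Measurable G) (a b : ℝ) (ha : 0 ≤ a) :
    IntegrableOn (fun t => t^3 * G t) (Ioc a b) volume := by
  rcases le_or_gt b a with h | h
  · rw [Ioc_eq_empty (by exact not_lt.mpr h)]; exact integrableOn_empty
  refine Measure.integrableOn_of_bounded (M := b^3) (by simp [measure_Ioc_lt_top.ne])
    ((measurable_id.pow_const 3).mul hGm).aestronglyMeasurable ?_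
  filter_upwards [ae_restrict_mem measurableSet_Ioc] with t ht
  · have ht1 : 0 < t := lt_of_le_of_lt ha ht.1
    have ht3 : t^3 ≤ b^3 := pow_le_pow_left₀ ht1.le ht.2 3
    have := hG0 t; have := hG1 t
    rw [Real.norm_eq_abs, abs_of_nonneg (by positivity)]
    nlinarith [mul_le_mul_of_nonneg_left (hG1 t) (pow_nonneg ht1.le 3)]

private lemma st12_Ibound {G : ℝ → ℝ} {α : ℝ} (hα4 : α < 4)
    (hanti : Antitone G) (hG0 : ∀ u, 0 ≤ G u) (hG1 : ∀ u, G u ≤ 1)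
    (hGm : Measurable G) (hpos : ∀ u : ℝ, 0 < u → 0 < G u)
    (hreg2 : Tendsto (fun u => G (u/2) / G u) atTop (𝓝 ((2:ℝ) ^ α))) :
    ∃ C B : ℝ, 0 ≤ B ∧
      ∀ x : ℝ, (∫ t in Ioc (0:ℝ) x, t^3 * G t) ≤ C + B * (x^4 * G x) := by
  have h2a : (0:ℝ) < 2 ^ α := Real.rpow_pos_of_pos (by norm_num) α
  have h16 : (2:ℝ) ^ α < 16 := by
    have h := Real.rpow_lt_rpow_of_exponent_lt (show (1:ℝ) < 2 by norm_num) hα4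
    have h4 : ((2:ℝ) ^ (4:ℝ)) = 16 := by
      rw [show (4:ℝ) = ((4:ℕ):ℝ) by norm_num, Real.rpow_natCast]; norm_num
    rwa [h4] at h
  obtain ⟨K, hKα, hK16, hKpos⟩ : ∃ K : ℝ, (2:ℝ)^α < K ∧ K < 16 ∧ 0 < K :=
    ⟨((2:ℝ)^α + 16)/2, by linarith, by linarith, by linarith⟩
  set B : ℝ := 8*K/(16-K) with hBdef
  have hBpos : 0 < B := by apply div_pos (by linarith) (by linarith)
  have hBeq : B*K/16 + K/2 = B := by
    have h1 : (16:ℝ) - K ≠ 0 := by linarith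
    rw [hBdef]; field_simp [h1]; ring
  obtain ⟨u₀', hu₀'⟩ := (eventually_atTop).mp (hreg2.eventually (eventually_lt_nhds hKα))
  set u₀ : ℝ := max u₀' 1 with hu₀def
  have hu₀1 : (1:ℝ) ≤ u₀ := le_max_right _ _
  have hu₀pos : (0:ℝ) < u₀ := by linarith
  have hhalf : ∀ v : ℝ, u₀ ≤ v → G (v/2) ≤ K * G v := by
    intro v hv
    have hvpos : 0 < v := lt_of_lt_of_le hu₀pos hv
    have h := hu₀' v (le_trans (le_max_left _ _) hv)
    have hGv : 0 < G v := hpos v hvpos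
    rw [div_lt_iff₀ hGv] at h
    linarith
  refine ⟨u₀^4, B, hBpos.le, ?_⟩
  have hbase : ∀ x : ℝ, x ≤ u₀ →
      (∫ t in Ioc (0:ℝ) x, t^3 * G t) ≤ u₀^4 + B * (x^4 * G x) := by
      intro x hx
      have hBx : 0 ≤ B * (x^4 * G x) := by
        have := hG0 x; positivity
      rcases le_or_gt x 0 with h0 | h0
      · rw [Ioc_eq_empty (by exact not_lt.mpr h0)]
        simp only [Measure.restrict_empty, integral_zero_measure]
        positivity
      · have hle : (∫ t in Ioc (0:ℝ) x, t^3 * G t) ≤ ∫ t in Ioc (0:ℝ) x, t^3 := by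
          apply setIntegral_mono_on (st12_int hG0 hG1 hGm 0 x le_rfl)
            (intervalIntegral.intervalIntegrable_pow 3).1 measurableSet_Ioc
          intro t ht
          have := hG0 t; have := hG1 t
          nlinarith [ht.1, pow_nonneg (le_of_lt ht.1) 3]
        have hval : (∫ t in Ioc (0:ℝ) x, t^3) = x^4/4 := by
          rw [← intervalIntegral.integral_of_le h0.le, integral_pow]
          norm_num
        rw [hval] at hle
        nlinarith [pow_le_pow_left₀ h0.le hx 4, pow_nonneg h0.le 4]
  have main : ∀ n : ℕ, ∀ x : ℝ, x ≤ 2^n * u₀ →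
      (∫ t in Ioc (0:ℝ) x, t^3 * G t) ≤ u₀^4 + B * (x^4 * G x) := by
    intro n
    induction n with
    | zero =>
      intro x hx
      simp only [pow_zero, one_mul] at hx
      exact hbase x hx
    | succ n ih =>
      intro x hx
      rcases le_or_gt x u₀ with hxu | hxu
      · exact hbase x hxu
      · have hx2 : x/2 ≤ 2^n * u₀ := by
          rw [pow_succ] at hx; linarith
        have hxpos : 0 < x := by linarith
        have hsplit : (∫ t in Ioc (0:ℝ) x, t^3 * G t)
            = (∫ t in Ioc (0:ℝ) (x/2), t^3 * G t) + ∫ t in Ioc (x/2) x, t^3 * G t := by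
          rw [← setIntegral_union (Set.Ioc_disjoint_Ioc_of_le le_rfl) measurableSet_Ioc
            (st12_int hG0 hG1 hGm 0 (x/2) le_rfl) (st12_int hG0 hG1 hGm (x/2) x (by linarith)),
            Ioc_union_Ioc_eq_Ioc (by linarith) (by linarith)]
        have hbd : (∫ t in Ioc (x/2) x, t^3 * G t) ≤ (x/2) * (x^3 * G (x/2)) := by
          have hmono : (∫ t in Ioc (x/2) x, t^3 * G t)
              ≤ ∫ _t in Ioc (x/2) x, x^3 * G (x/2) := by
            apply setIntegral_mono_on (st12_int hG0 hG1 hGm (x/2) x (by linarith))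
              (integrableOn_const measure_Ioc_lt_top.ne) measurableSet_Ioc
            intro t ht
            have ht0 : 0 < t := lt_of_le_of_lt (by linarith) ht.1
            have h1 : t^3 ≤ x^3 := pow_le_pow_left₀ ht0.le ht.2 3
            have h2 : G t ≤ G (x/2) := hanti ht.1.le
            have := hG0 t
            nlinarith [hG0 (x/2), pow_nonneg ht0.le 3]
          rw [setIntegral_const, Real.volume_real_Ioc_of_le (by linarith)] at hmono
          calc (∫ t in Ioc (x/2) x, t^3 * G t) ≤ (x - x/2) • (x^3 * G (x/2)) := hmono
            _ = (x/2) * (x^3 * G (x/2)) := by rw [smul_eq_mul]; ring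
        have hKG : G (x/2) ≤ K * G x := hhalf x hxu.le
        have hih := ih (x/2) hx2
        have hx4 : (0:ℝ) ≤ x^4 := by positivity
        have hGx : 0 ≤ G x := hG0 x
        have e1 : (x/2)^4 * G (x/2) ≤ x^4/16 * (K * G x) := by
          have : (x/2)^4 = x^4/16 := by ring
          rw [this]
          apply mul_le_mul_of_nonneg_left hKG (by positivity)
        have e2 : (x/2) * (x^3 * G (x/2)) ≤ (x/2) * (x^3 * (K * G x)) := by
          apply mul_le_mul_of_nonneg_left _ (by positivity)
          exact mul_le_mul_of_nonneg_left hKG (by positivity)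
        rw [hsplit]
        have : u₀^4 + B * ((x/2)^4 * G (x/2)) + (x/2) * (x^3 * (K * G x))
            ≤ u₀^4 + B * (x^4 * G x) := by
          have e3 : B * ((x/2)^4 * G (x/2)) ≤ B * (x^4/16 * (K * G x)) :=
            mul_le_mul_of_nonneg_left e1 hBpos.le
          have e4 : (x/2) * (x^3 * (K * G x)) = K/2 * (x^4 * G x) := by ring
          have e5 : B * (x^4/16 * (K * G x)) = B*K/16 * (x^4 * G x) := by ring
          nlinarith [mul_nonneg hx4 hGx]
        linarith [hih, hbd, e2]
  intro x
  obtain ⟨n, hn⟩ := pow_unbounded_of_one_lt (x/u₀) (show (1:ℝ) < 2 by norm_num)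
  exact main n x (by rw [← div_le_iff₀ hu₀pos] at *; linarith)

private lemma st12_Phi {G : ℝ → ℝ} {α : ℝ} (hα4 : α < 4)
    (hanti : Antitone G) (hG0 : ∀ u, 0 ≤ G u)
    (hGm : Measurable G) (hpos : ∀ u : ℝ, 0 < u → 0 < G u)
    (hreg : ∀ l : ℝ, 0 < l → Tendsto (fun u => G (l*u) / G u) atTop (𝓝 (l ^ (-α))))
    {ε : ℝ} (hε0 : 0 < ε) (hε1 : ε < 1) :
    Tendsto (fun x => ∫ s in Ioc ε 1, s^3 * (G (s*x) / G x)) atTop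
      (𝓝 ((1 - ε ^ (4-α))/(4-α))) := by
  have hlimval : (∫ s in Ioc ε 1, s ^ ((3:ℝ) - α)) = (1 - ε ^ (4-α))/(4-α) := by
    rw [← intervalIntegral.integral_of_le hε1.le,
      integral_rpow (Or.inl (by linarith : (-1:ℝ) < 3 - α))]
    rw [show (3:ℝ) - α + 1 = 4 - α by ring, Real.one_rpow]
  rw [← hlimval]
  have hεα : (0:ℝ) < ε ^ (-α) := Real.rpow_pos_of_pos hε0 _
  apply tendsto_integral_filter_of_dominated_convergence (fun _ => 2 * ε ^ (-α))
  · exact Eventually.of_forall fun x =>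
      ((measurable_id.pow_const 3).mul
        ((hGm.comp (measurable_id.mul_const x)).div_const (G x))).aestronglyMeasurable
  · have h1 : ∀ᶠ x : ℝ in atTop, G (ε*x) / G x < 2 * ε ^ (-α) :=
      (hreg ε hε0).eventually (eventually_lt_nhds (by linarith))
    filter_upwards [h1, eventually_gt_atTop (0:ℝ)] with x hx hx0
    filter_upwards [ae_restrict_mem measurableSet_Ioc] with s hs
    have hs0 : 0 < s := lt_trans hε0 hs.1
    have hGx : 0 < G x := hpos x hx0
    have hmono : G (s*x) ≤ G (ε*x) := hanti (by nlinarith [hs.1])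
    have hnn : 0 ≤ s^3 * (G (s*x) / G x) := by
      have := hG0 (s*x); positivity
    rw [Real.norm_eq_abs, abs_of_nonneg hnn]
    have hs3 : s^3 ≤ 1 := pow_le_one₀ hs0.le hs.2
    have hdiv : G (s*x) / G x ≤ G (ε*x) / G x :=
      div_le_div_of_nonneg_right hmono hGx.le
    have h2 : G (s*x) / G x ≤ 2 * ε ^ (-α) := le_trans hdiv hx.le
    have hdnn : 0 ≤ G (s*x) / G x := by have := hG0 (s*x); positivity
    nlinarith
  · exact integrable_const _
  · filter_upwards [ae_restrict_mem measurableSet_Ioc] with s hs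
    have hs0 : 0 < s := lt_trans hε0 hs.1
    have h := (hreg s hs0).const_mul (s^3)
    have heq : s^3 * s ^ (-α) = s ^ ((3:ℝ) - α) := by
      rw [show ((3:ℝ) - α) = (3:ℝ) + (-α) by ring, Real.rpow_add hs0,
        ← Real.rpow_natCast s 3]
      norm_num
    rw [heq] at h
    exact h.congr (fun x => by ring)

private lemma st12_T {G : ℝ → ℝ} {α : ℝ} (hα2 : 2 < α) (hα4 : α < 4)
    (hanti : Antitone G) (hG0 : ∀ u, 0 ≤ G u) (hG1 : ∀ u, G u ≤ 1)
    (hGm : Measurable G) (hpos : ∀ u : ℝ, 0 < u → 0 < G u)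
    (hreg : ∀ l : ℝ, 0 < l → Tendsto (fun u => G (l*u) / G u) atTop (𝓝 (l ^ (-α)))) :
    Tendsto (fun x => (∫ t in Ioc (0:ℝ) x, t^3 * G t) / (x^4 * G x)) atTop
      (𝓝 (1/(4-α))) := by
  have h4α : (0:ℝ) < 4 - α := by linarith
  have hregC : Tendsto (fun u => G (2*u) / G u) atTop (𝓝 ((2:ℝ) ^ (-α))) := hreg 2 (by norm_num)
  have hlemC := st12_lemC hα4 hanti hpos hregC
  have hreg2 : Tendsto (fun u => G (u/2) / G u) atTop (𝓝 ((2:ℝ) ^ α)) := by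
    have h := hreg (1/2) (by norm_num)
    have e1 : ((1:ℝ)/2) ^ (-α) = (2:ℝ) ^ α := by
      rw [one_div, Real.inv_rpow (by norm_num), ← Real.rpow_neg (by norm_num), neg_neg]
    rw [e1] at h
    exact h.congr (fun u => by rw [show (1/2:ℝ)*u = u/2 by ring])
  obtain ⟨C, B, hB0, hCB⟩ := st12_Ibound hα4 hanti hG0 hG1 hGm hpos hreg2
  rw [Metric.tendsto_nhds]
  intro δ hδ
  -- choose ε, opaque
  obtain ⟨ε, hε0, hε1, hεb⟩ :
      ∃ ε : ℝ, 0 < ε ∧ ε < 1 ∧ (B + 1/(4-α)) * ε ^ (4-α) ≤ 2*δ/5 := by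
    have hBpos : (0:ℝ) < B + 1/(4-α) := by
      have : (0:ℝ) < 1/(4-α) := by positivity
      linarith
    set η : ℝ := (2*δ/5) / (B + 1/(4-α)) with hηdef
    have hηpos : 0 < η := by positivity
    refine ⟨min (1/2) (η ^ ((4-α)⁻¹)),
      lt_min (by norm_num) (Real.rpow_pos_of_pos hηpos _),
      lt_of_le_of_lt (min_le_left _ _) (by norm_num), ?_⟩
    have hεη : (min (1/2) (η ^ ((4-α)⁻¹))) ^ (4-α) ≤ η := by
      calc (min (1/2) (η ^ ((4-α)⁻¹))) ^ (4-α) ≤ (η ^ ((4-α)⁻¹)) ^ (4-α) := by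
            apply Real.rpow_le_rpow (le_of_lt (lt_min (by norm_num)
              (Real.rpow_pos_of_pos hηpos _))) (min_le_right _ _) h4α.le
        _ = η := by
            rw [← Real.rpow_mul hηpos.le, inv_mul_cancel₀ h4α.ne', Real.rpow_one]
    calc (B + 1/(4-α)) * (min (1/2) (η ^ ((4-α)⁻¹))) ^ (4-α)
        ≤ (B + 1/(4-α)) * η := mul_le_mul_of_nonneg_left hεη hBpos.le
      _ = 2*δ/5 := by rw [hηdef, mul_div_cancel₀ _ hBpos.ne']
  have hεA : ε^4 * ε ^ (-α) = ε ^ (4-α) := by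
    rw [show (4:ℝ)-α = ((4:ℕ):ℝ) + (-α) by push_cast; ring, Real.rpow_add hε0,
      Real.rpow_natCast]
  have hεrp : (0:ℝ) < ε ^ (4-α) := Real.rpow_pos_of_pos hε0 _
  have hPhi := st12_Phi hα4 hanti hG0 hGm hpos hreg hε0 hε1
  obtain ⟨cε, hcε⟩ : ∃ c, c = (1 - ε ^ (4-α))/(4-α) := ⟨_, rfl⟩
  rw [← hcε] at hPhi
  -- eventual facts
  have hev1 : ∀ᶠ x : ℝ in atTop, C/(x^4 * G x) < δ/5 :=
    (tendsto_const_nhds.div_atTop hlemC).eventually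
      (eventually_lt_nhds (by linarith : (0:ℝ) < δ/5))
  obtain ⟨δ', hδ'pos, hδ'le⟩ : ∃ δ' : ℝ, 0 < δ' ∧ B * ε^4 * δ' ≤ δ/5 := by
    have hP : (0:ℝ) < B*ε^4+1 := by positivity
    refine ⟨δ/(5*(B*ε^4+1)), by positivity, ?_⟩
    have heq2 : B*ε^4*(δ/(5*(B*ε^4+1))) = δ/5 * (B*ε^4/(B*ε^4+1)) := by
      field_simp
    have hle : B*ε^4/(B*ε^4+1) ≤ 1 := by
      rw [div_le_one hP]; linarith
    nlinarith
  have hev2 : ∀ᶠ x : ℝ in atTop, G (ε*x)/G x < ε ^ (-α) + δ' :=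
    (hreg ε hε0).eventually (eventually_lt_nhds (by linarith))
  have hev3 : ∀ᶠ x : ℝ in atTop,
      |(∫ s in Ioc ε 1, s^3 * (G (s*x) / G x)) - cε| < δ/5 := by
    have := Metric.tendsto_nhds.mp hPhi (δ/5) (by linarith)
    filter_upwards [this] with x hx
    rwa [Real.dist_eq] at hx
  filter_upwards [hev1, hev2, hev3, eventually_gt_atTop (0:ℝ)] with x h1 h2 h3 hx0
  have hGx : 0 < G x := hpos x hx0
  have hεx : 0 < ε * x := by positivity
  have hD : 0 < x^4 * G x := by positivity
  -- split the integral
  have hsplit : (∫ t in Ioc (0:ℝ) x, t^3 * G t)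
      = (∫ t in Ioc (0:ℝ) (ε*x), t^3 * G t) + ∫ t in Ioc (ε*x) x, t^3 * G t := by
    rw [← setIntegral_union (Set.Ioc_disjoint_Ioc_of_le le_rfl) measurableSet_Ioc
      (st12_int hG0 hG1 hGm 0 (ε*x) le_rfl) (st12_int hG0 hG1 hGm (ε*x) x hεx.le),
      Ioc_union_Ioc_eq_Ioc hεx.le (by nlinarith)]
  -- change of variables
  have hchange : (∫ t in Ioc (ε*x) x, t^3 * G t)
      = x^4 * ∫ s in Ioc ε 1, s^3 * G (s*x) := by
    have h0 : (∫ t in Ioc (ε*x) x, t^3 * G t) = ∫ t in (ε*x)..x, t^3 * G t := by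
      rw [intervalIntegral.integral_of_le (by nlinarith)]
    have h1 : ∫ s in ε..(1:ℝ), (s*x)^3 * G (s * x)
        = x⁻¹ • ∫ t in (ε*x)..(1*x), t^3 * G t :=
      intervalIntegral.integral_comp_mul_right (fun t => t^3 * G t) hx0.ne'
    rw [one_mul] at h1
    have h2 : ∀ s : ℝ, (s*x)^3 * G (s*x) = x^3 * (s^3 * G (s*x)) := fun s => by ring
    simp only [h2] at h1
    rw [intervalIntegral.integral_const_mul] at h1
    rw [h0, ← intervalIntegral.integral_of_le hε1.le]
    rw [smul_eq_mul] at h1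
    have hx3 : x^3 ≠ 0 := by positivity
    field_simp at h1
    rw [mul_comm ε x, ← h1]; simp_rw [mul_comm x]
  -- identify Phi
  have hPhiEq : (∫ s in Ioc ε 1, s^3 * (G (s*x) / G x))
      = (∫ s in Ioc ε 1, s^3 * G (s*x)) / G x := by
    rw [← integral_div]
    exact integral_congr_ae (Eventually.of_forall fun s => by ring)
  have hA0 : 0 ≤ ∫ t in Ioc (0:ℝ) (ε*x), t^3 * G t :=
    setIntegral_nonneg measurableSet_Ioc
      (fun t ht => mul_nonneg (pow_nonneg ht.1.le 3) (hG0 t))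
  have hTx : (∫ t in Ioc (0:ℝ) x, t^3 * G t) / (x^4 * G x)
      = (∫ t in Ioc (0:ℝ) (ε*x), t^3 * G t) / (x^4 * G x)
        + (∫ s in Ioc ε 1, s^3 * (G (s*x) / G x)) := by
    rw [hsplit, hchange, hPhiEq]
    field_simp
  -- bound A / D
  have hAD : (∫ t in Ioc (0:ℝ) (ε*x), t^3 * G t) / (x^4 * G x)
      < δ/5 + (B * ε ^ (4-α) + δ/5) := by
    have hup : (∫ t in Ioc (0:ℝ) (ε*x), t^3 * G t) ≤ C + B * ((ε*x)^4 * G (ε*x)) := hCB (ε*x)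
    have hdivle : (∫ t in Ioc (0:ℝ) (ε*x), t^3 * G t) / (x^4*G x)
        ≤ C/(x^4*G x) + B * ε^4 * (G (ε*x)/G x) := by
      rw [div_add' _ _ _ hD.ne', div_le_div_iff_of_pos_right hD]
      calc (∫ t in Ioc (0:ℝ) (ε*x), t^3 * G t) ≤ C + B * ((ε*x)^4 * G (ε*x)) := hup
        _ = C + B * ε^4 * (G (ε*x)/G x) * (x^4 * G x) := by
            field_simp
    have hb2 : B * ε^4 * (G (ε*x)/G x) ≤ B * ε^4 * (ε ^ (-α) + δ') :=
      mul_le_mul_of_nonneg_left h2.le (by positivity)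
    have e : B * ε^4 * ε ^ (-α) = B * ε ^ (4-α) := by rw [mul_assoc, hεA]
    have e2 : B*ε^4*(ε ^ (-α)+δ') = B*ε^4*ε ^ (-α) + B*ε^4*δ' := by ring
    linarith
  -- final assembly
  rw [Real.dist_eq, hTx]
  have hcdist : cε - 1/(4-α) = -(ε ^ (4-α)/(4-α)) := by rw [hcε]; ring
  have t1 : (∫ t in Ioc (0:ℝ) (ε*x), t^3 * G t) / (x^4 * G x)
      + (∫ s in Ioc ε 1, s^3 * (G (s*x) / G x)) - 1/(4-α)
      = ((∫ t in Ioc (0:ℝ) (ε*x), t^3 * G t) / (x^4 * G x)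
        + ((∫ s in Ioc ε 1, s^3 * (G (s*x) / G x)) - cε)) + (cε - 1/(4-α)) := by ring
  rw [t1]
  have habs1 := abs_add_le ((∫ t in Ioc (0:ℝ) (ε*x), t^3 * G t) / (x^4 * G x)
        + ((∫ s in Ioc ε 1, s^3 * (G (s*x) / G x)) - cε)) (cε - 1/(4-α))
  have habs2 := abs_add_le ((∫ t in Ioc (0:ℝ) (ε*x), t^3 * G t) / (x^4 * G x))
        ((∫ s in Ioc ε 1, s^3 * (G (s*x) / G x)) - cε)
  have habs3 : |(∫ t in Ioc (0:ℝ) (ε*x), t^3 * G t) / (x^4 * G x)|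
      = (∫ t in Ioc (0:ℝ) (ε*x), t^3 * G t) / (x^4 * G x) :=
    abs_of_nonneg (div_nonneg hA0 hD.le)
  have habs4 : |cε - 1/(4-α)| = ε ^ (4-α)/(4-α) := by
    rw [hcdist, abs_neg, abs_of_nonneg (by positivity)]
  have hfin : ε ^ (4-α)/(4-α) + B * ε ^ (4-α) = (B + 1/(4-α)) * ε ^ (4-α) := by ring
  linarith

private lemma st12_H {Ω : Type*} [MeasureSpace Ω] [IsProbabilityMeasure (ℙ : Measure Ω)]
    (Y : Ω → ℝ) (hYm : Measurable Y) (hY0 : ∀ ω, 0 ≤ Y ω) {x : ℝ} (hx : 0 < x) :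
    ∫ ω in {ω | Y ω ≤ x}, (Y ω)^4 ∂ℙ
      = 4 * (∫ t in Ioc (0:ℝ) x, t^3 * (ℙ {ω | t < Y ω}).toReal)
        - x^4 * (ℙ {ω | x < Y ω}).toReal := by
  have hS : MeasurableSet {ω | Y ω ≤ x} := hYm measurableSet_Iic
  have hSt : ∀ t : ℝ, MeasurableSet {ω | t < Y ω} := fun t => hYm measurableSet_Ioi
  set S := {ω | Y ω ≤ x} with hSdef
  set μ := (ℙ : Measure Ω).restrict S with hμ
  -- Step A: lintegral layercake with weight 4 t^3
  have g_intble : ∀ t > (0:ℝ), IntervalIntegrable (fun t => 4*t^3) volume 0 t := by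
    intro t _
    exact (continuous_const.mul (continuous_pow 3)).intervalIntegrable 0 t
  have lc := lintegral_comp_eq_lintegral_meas_lt_mul μ (f := Y) (g := fun t => 4*t^3)
    (Eventually.of_forall hY0) hYm.aemeasurable g_intble
    (by filter_upwards [ae_restrict_mem measurableSet_Ioi] with t ht
        have ht0 : (0:ℝ) < t := ht
        positivity)
  have hG4 : ∀ y : ℝ, (∫ t in (0:ℝ)..y, 4*t^3) = y^4 := by
    intro y
    rw [intervalIntegral.integral_const_mul, integral_pow]
    ring
  simp only [hG4] at lc
  -- Step B: LHS as toReal of lintegral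
  have hL : ∫ ω in S, (Y ω)^4 ∂ℙ = (∫⁻ ω, ENNReal.ofReal ((Y ω)^4) ∂μ).toReal := by
    rw [← hμ, integral_eq_lintegral_of_nonneg_ae
      (Eventually.of_forall (fun ω => by positivity))
      (hYm.pow_const 4).aestronglyMeasurable]
  -- Step C: kill the part above x
  have hzero : ∫⁻ t in Ioi x, μ {a | t < Y a} * ENNReal.ofReal (4*t^3) = 0 := by
    rw [← lintegral_zero (μ := volume.restrict (Ioi x))]
    apply setLIntegral_congr_fun measurableSet_Ioi
    intro t ht
    have hempty : {a | t < Y a} ∩ S = ∅ := by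
      ext ω
      simp only [mem_inter_iff, mem_setOf_eq, mem_empty_iff_false, iff_false, hSdef]
      rintro ⟨h1, h2⟩
      exact absurd (lt_of_lt_of_le (lt_trans ht h1) h2) (lt_irrefl x)
    beta_reduce
    rw [hμ, Measure.restrict_apply (hSt t), hempty]
    simp
  have hsplitIoi : ∫⁻ t in Ioi (0:ℝ), μ {a | t < Y a} * ENNReal.ofReal (4*t^3)
      = ∫⁻ t in Ioc 0 x, μ {a | t < Y a} * ENNReal.ofReal (4*t^3) := by
    rw [← Ioc_union_Ioi_eq_Ioi hx.le, lintegral_union measurableSet_Ioi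
      Ioc_disjoint_Ioi_same, hzero, add_zero]
  -- Step D: convert to a real integral on Ioc 0 x
  have hmono_meas : Antitone (fun t => ℙ ({a | t < Y a} ∩ S)) := by
    intro s t hst
    exact measure_mono (inter_subset_inter_left _ (fun a ha => lt_of_le_of_lt hst ha))
  have hFmeas : Measurable (fun t => 4*t^3 * (ℙ ({a | t < Y a} ∩ S)).toReal) :=
    (measurable_const.mul (measurable_id.pow_const 3)).mul
      hmono_meas.measurable.ennreal_toReal
  have hreal : ∫ t in Ioc (0:ℝ) x, 4*t^3 * (ℙ ({a | t < Y a} ∩ S)).toReal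
      = (∫⁻ t in Ioc 0 x, μ {a | t < Y a} * ENNReal.ofReal (4*t^3)).toReal := by
    rw [integral_eq_lintegral_of_nonneg_ae
      (by filter_upwards [ae_restrict_mem measurableSet_Ioc] with t ht
          have ht0 : 0 < t := ht.1
          exact mul_nonneg (by positivity : (0:ℝ) ≤ 4*t^3) ENNReal.toReal_nonneg)
      hFmeas.aestronglyMeasurable]
    congr 1
    apply setLIntegral_congr_fun measurableSet_Ioc ?_
    intro t ht
    have ht0 : 0 < t := ht.1
    beta_reduce
    rw [hμ, Measure.restrict_apply (hSt t)]
    rw [ENNReal.ofReal_mul (by positivity : (0:ℝ) ≤ 4*t^3),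
      ENNReal.ofReal_toReal (measure_ne_top _ _), mul_comm]
  -- combine A-D
  have hmain : ∫ ω in S, (Y ω)^4 ∂ℙ
      = ∫ t in Ioc (0:ℝ) x, 4*t^3 * (ℙ ({a | t < Y a} ∩ S)).toReal := by
    rw [hL, lc, hsplitIoi, hreal]
  -- Step E: decompose the truncated tail
  have hdec : ∀ t : ℝ, t ≤ x →
      (ℙ ({a | t < Y a} ∩ S)).toReal = (ℙ {a | t < Y a}).toReal - (ℙ {a | x < Y a}).toReal := by
    intro t ht
    have hun : {a | t < Y a} = ({a | t < Y a} ∩ S) ∪ {a | x < Y a} := by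
      ext ω
      simp only [mem_union, mem_inter_iff, mem_setOf_eq, hSdef]
      constructor
      · intro h
        rcases le_or_gt (Y ω) x with h2 | h2
        · exact Or.inl ⟨h, h2⟩
        · exact Or.inr h2
      · rintro (⟨h, _⟩ | h)
        · exact h
        · exact lt_of_le_of_lt ht h
    have hdisj : Disjoint ({a | t < Y a} ∩ S) {a | x < Y a} := by
      rw [disjoint_left]
      rintro ω ⟨_, h2⟩ h3
      exact absurd (lt_of_lt_of_le h3 h2) (lt_irrefl x)
    have := measure_union (μ := (ℙ : Measure Ω)) hdisj (hSt x)
    rw [← hun] at this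
    have htr := congrArg ENNReal.toReal this
    rw [ENNReal.toReal_add (measure_ne_top _ _) (measure_ne_top _ _)] at htr
    linarith
  have hInt1 : IntegrableOn (fun t => t^3 * (ℙ {a | t < Y a}).toReal) (Ioc 0 x) volume := by
    have hGanti : Antitone (fun t : ℝ => ℙ {a | t < Y a}) :=
      fun s t hst => measure_mono (fun a ha => lt_of_le_of_lt hst ha)
    apply Measure.integrableOn_of_bounded (M := x^3) (by simp [measure_Ioc_lt_top.ne])
      ((measurable_id.pow_const 3).mul
        hGanti.measurable.ennreal_toReal).aestronglyMeasurable
    filter_upwards [ae_restrict_mem measurableSet_Ioc] with t ht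
    simp only [id_eq, Pi.mul_apply]
    have ht0 : 0 < t := ht.1
    have h1 : (ℙ {a | t < Y a}).toReal ≤ 1 := by
      rw [← ENNReal.toReal_one]
      exact ENNReal.toReal_mono ENNReal.one_ne_top prob_le_one
    have h0 : 0 ≤ (ℙ {a | t < Y a}).toReal := ENNReal.toReal_nonneg
    rw [Real.norm_eq_abs, abs_of_nonneg (mul_nonneg (by positivity) h0)]
    have ht3 : t^3 ≤ x^3 := pow_le_pow_left₀ ht0.le ht.2 3
    nlinarith [mul_le_mul_of_nonneg_left h1 (pow_nonneg ht0.le 3)]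
  have hInt2 : IntegrableOn (fun t => t^3) (Ioc 0 x) volume :=
    (intervalIntegral.intervalIntegrable_pow 3).1
  have hfinal : ∫ t in Ioc (0:ℝ) x, 4*t^3 * (ℙ ({a | t < Y a} ∩ S)).toReal
      = 4 * (∫ t in Ioc (0:ℝ) x, t^3 * (ℙ {a | t < Y a}).toReal)
        - x^4 * (ℙ {a | x < Y a}).toReal := by
    have hcongr : ∫ t in Ioc (0:ℝ) x, 4*t^3 * (ℙ ({a | t < Y a} ∩ S)).toReal
        = ∫ t in Ioc (0:ℝ) x,
            (4 * (t^3 * (ℙ {a | t < Y a}).toReal) - (ℙ {a | x < Y a}).toReal * (4*t^3)) := by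
      apply setIntegral_congr_fun measurableSet_Ioc
      intro t ht
      dsimp only
      rw [hdec t ht.2]
      ring
    rw [hcongr, integral_sub ((hInt1.const_mul 4)) ((hInt2.const_mul _).const_mul _),
      integral_const_mul, integral_const_mul, integral_const_mul]
    have : ∫ t in Ioc (0:ℝ) x, t^3 = x^4/4 := by
      rw [← intervalIntegral.integral_of_le hx.le, integral_pow]
      norm_num
    rw [this]
    ring
  rw [hmain, hfinal]

/-- Let `X` be a random element of a normed space with
`P(‖X‖ > u) > 0` for all `u > 0` and with `u ↦ u^α P(‖X‖ > u)` slowly varying,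
`α ∈ (2,4)`. If `a_N → ∞` with `N P(‖X‖ > a_N) → 1` and
`k_N = (α/(4−α))^{2/α} a_N²`, then `N k_N⁻² E[‖X‖⁴ 1{‖X‖² ≤ k_N}] → 1`. -/
theorem statement12 {Ω : Type*} [MeasureSpace Ω] [IsProbabilityMeasure (ℙ : Measure Ω)]
    {E : Type*} [NormedAddCommGroup E]
    (X : Ω → E) (hmeas : Measurable fun ω => ‖X ω‖)
    (α : ℝ) (hα2 : 2 < α) (hα4 : α < 4)
    (hpos : ∀ u : ℝ, 0 < u → 0 < ℙ {ω | u < ‖X ω‖})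
    (hslow : ∀ l : ℝ, 0 < l →
      Tendsto (fun u : ℝ =>
          ((l * u) ^ α * (ℙ {ω | l * u < ‖X ω‖}).toReal)
            / (u ^ α * (ℙ {ω | u < ‖X ω‖}).toReal))
        atTop (𝓝 1))
    (a : ℕ → ℝ) (ha : Tendsto a atTop atTop)
    (haN : Tendsto (fun N : ℕ => (N : ℝ) * (ℙ {ω | a N < ‖X ω‖}).toReal)
      atTop (𝓝 1))
    (k : ℕ → ℝ) (hk : ∀ N, k N = (α / (4 - α)) ^ (2 / α) * a N ^ 2) :
    Tendsto (fun N : ℕ =>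
        (N : ℝ) / k N ^ 2 * ∫ ω in {ω | ‖X ω‖ ^ 2 ≤ k N}, ‖X ω‖ ^ 4 ∂ℙ)
      atTop (𝓝 1) := by
  have h4α : (0:ℝ) < 4 - α := by linarith
  have hα0 : (0:ℝ) < α := by linarith
  -- the tail function
  have hanti : Antitone (fun u : ℝ => (ℙ {ω | u < ‖X ω‖}).toReal) := fun s t hst =>
    ENNReal.toReal_mono (measure_ne_top _ _)
      (measure_mono (fun ω hω => lt_of_le_of_lt hst hω))
  have hG0 : ∀ u : ℝ, 0 ≤ (ℙ {ω | u < ‖X ω‖}).toReal := fun u => ENNReal.toReal_nonneg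
  have hG1 : ∀ u : ℝ, (ℙ {ω | u < ‖X ω‖}).toReal ≤ 1 := fun u => by
    rw [← ENNReal.toReal_one]
    exact ENNReal.toReal_mono ENNReal.one_ne_top prob_le_one
  have hGm : Measurable (fun u : ℝ => (ℙ {ω | u < ‖X ω‖}).toReal) := hanti.measurable
  have hGpos : ∀ u : ℝ, 0 < u → 0 < (ℙ {ω | u < ‖X ω‖}).toReal := fun u hu =>
    ENNReal.toReal_pos (hpos u hu).ne' (measure_ne_top _ _)
  -- regular variation of the tail
  have hreg : ∀ l : ℝ, 0 < l → Tendsto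
      (fun u => (ℙ {ω | l*u < ‖X ω‖}).toReal / (ℙ {ω | u < ‖X ω‖}).toReal)
      atTop (𝓝 (l ^ (-α))) := by
    intro l hl
    have h := hslow l hl
    have hlα : (0:ℝ) < l ^ α := Real.rpow_pos_of_pos hl α
    have h2 := h.mul_const (l^α)⁻¹
    rw [one_mul] at h2
    have heq : (fun u : ℝ => ((l * u) ^ α * (ℙ {ω | l * u < ‖X ω‖}).toReal)
          / (u^α * (ℙ {ω | u < ‖X ω‖}).toReal) * (l^α)⁻¹)
        =ᶠ[atTop] (fun u => (ℙ {ω | l*u < ‖X ω‖}).toReal / (ℙ {ω | u < ‖X ω‖}).toReal) := by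
      filter_upwards [eventually_gt_atTop (0:ℝ)] with u hu
      have huα : (0:ℝ) < u ^ α := Real.rpow_pos_of_pos hu α
      have hGu : 0 < (ℙ {ω | u < ‖X ω‖}).toReal := hGpos u hu
      rw [Real.mul_rpow hl.le hu.le]
      field_simp
    have h3 := h2.congr' heq
    rwa [Real.rpow_neg hl.le]
  -- the scaling constant
  have hb : (0:ℝ) < α/(4-α) := by positivity
  have hl : (0:ℝ) < (α/(4-α)) ^ (α⁻¹) := Real.rpow_pos_of_pos hb _
  set l : ℝ := (α/(4-α)) ^ (α⁻¹) with hldef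
  have hc : (α/(4-α)) ^ ((2:ℝ)/α) = l^2 := by
    rw [hldef, show (2:ℝ)/α = α⁻¹ * 2 by ring, Real.rpow_mul hb.le, Real.rpow_two]
  have hlα : l ^ (-α) = (4-α)/α := by
    rw [hldef, ← Real.rpow_mul hb.le, show α⁻¹ * -α = -1 by field_simp,
      Real.rpow_neg_one, inv_div]
  -- limit ingredients
  have htends_x : Tendsto (fun N : ℕ => l * a N) atTop atTop :=
    ha.const_mul_atTop hl
  have hT := (st12_T (G := fun u : ℝ => (ℙ {ω | u < ‖X ω‖}).toReal)
    hα2 hα4 hanti hG0 hG1 hGm hGpos hreg).comp htends_x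
  have hratio := (hreg l hl).comp ha
  have hcomb := (haN.mul hratio).mul ((hT.const_mul 4).sub_const 1)
  have hval : 1 * l ^ (-α) * (4 * (1/(4-α)) - 1) = 1 := by
    rw [hlα]; field_simp; ring
  rw [hval] at hcomb
  apply hcomb.congr'
  have haNpos : ∀ᶠ N : ℕ in atTop, 0 < a N := ha.eventually (eventually_gt_atTop 0)
  filter_upwards [haNpos] with N hNpos
  have hx0 : 0 < l * a N := mul_pos hl hNpos
  have hkN : k N = (l * a N)^2 := by rw [hk N, hc]; ring
  have hGx : 0 < (ℙ {ω | l * a N < ‖X ω‖}).toReal := hGpos _ hx0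
  have hGa : 0 < (ℙ {ω | a N < ‖X ω‖}).toReal := hGpos _ hNpos
  have hset : {ω | ‖X ω‖^2 ≤ k N} = {ω : Ω | ‖X ω‖ ≤ l * a N} := by
    ext ω
    simp only [Set.mem_setOf_eq, hkN]
    constructor <;> intro h <;> nlinarith [norm_nonneg (X ω)]
  have hH := st12_H (fun ω => ‖X ω‖) hmeas (fun ω => norm_nonneg _) hx0
  simp only [Function.comp_apply]
  rw [hset, hH, hkN]
  have hxne : (l * a N) ≠ 0 := hx0.ne'
  have hGx' : (ℙ {ω | a N * l < ‖X ω‖}).toReal ≠ 0 := by rw [mul_comm]; exact hGx.ne'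
  field_simp
end
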